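/- Let σ be a ground solution of a flat disunification problem Γ and define the assignment S by S_X := {D ∈ At_nv | σ(X) ⊑ σ(D)}, where At_nv is the set of non-variable atoms of Γ. Then S is acyclic, and the induced local substitution σ_S satisfies σ(C) ⊑ σ_S(C) for every concept term C built over the atoms of Γ. -/

import Mathlib

inductive EL (N R : Type) : Type where
  | name : N → EL N R
  | top  : EL N R
  | conj : EL N R → EL N R → EL N R
  | ex   : R → EL N R → EL N R

structure Interp (N R : Type) where
  dom : Type
  nonempty : Nonempty dom
  cname : N → Set dom
  role : R → Set (dom × dom)

def Interp.sem {N R : Type} (I : Interp N R) : EL N R → Set I.dom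
  | .name A => I.cname A
  | .top => Set.univ
  | .conj C D => I.sem C ∩ I.sem D
  | .ex r C => {x | ∃ y, (x, y) ∈ I.role r ∧ y ∈ I.sem C}

/-- Semantic subsumption: `C ⊑ D` iff `C^I ⊆ D^I` for every interpretation `I`. -/
def Subsume {N R : Type} (C D : EL N R) : Prop :=
  ∀ I : Interp N R, I.sem C ⊆ I.sem D

/-- An atom is a concept name or an existential restriction. -/
def IsAtomEL {N R : Type} : EL N R → Prop
  | .name _ => True
  | .ex _ _ => True
  | _ => False

/-- Top-level atoms of a concept term. -/
def tla {N R : Type} : EL N R → List (EL N R)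
  | .conj C D => tla C ++ tla D
  | .top => []
  | .name A => [EL.name A]
  | .ex r C => [EL.ex r C]

/-- Conjunction of a nonempty list of terms `C :: Cs` (no extra ⊤ conjunct). -/
def conjs {N R : Type} : EL N R → List (EL N R) → EL N R
  | C, [] => C
  | C, D :: Ds => .conj C (conjs D Ds)

/-- Conjunction of a list of terms; the empty conjunction is ⊤. -/
def conjList {N R : Type} : List (EL N R) → EL N R
  | [] => .top
  | C :: Cs => conjs C Cs

/-- Symbol count: each concept name (and ⊤) is one symbol, each `∃r.` is one symbol. -/
def sizeEL {N R : Type} : EL N R → ℕ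
  | .name _ => 1
  | .top => 1
  | .conj C D => sizeEL C + sizeEL D + 1
  | .ex _ C => sizeEL C + 1

/-- Groundness: no occurrence of a variable (names are `V ⊕ K`, variables on the left). -/
def isGround {V K R : Type} : EL (V ⊕ K) R → Prop
  | .name (Sum.inl _) => False
  | .name (Sum.inr _) => True
  | .top => True
  | .conj C D => isGround C ∧ isGround D
  | .ex _ C => isGround C

/-- Application of a substitution `σ : V → EL (V ⊕ K) R` to a concept term. -/
def applySub {V K R : Type} (σ : V → EL (V ⊕ K) R) : EL (V ⊕ K) R → EL (V ⊕ K) R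
  | .name (Sum.inl X) => σ X
  | .name (Sum.inr A) => .name (Sum.inr A)
  | .top => .top
  | .conj C D => .conj (applySub σ C) (applySub σ D)
  | .ex r C => .ex r (applySub σ C)

/-- The variable `Y` occurs in the concept term. -/
def occursVar {V K R : Type} (Y : V) : EL (V ⊕ K) R → Prop
  | .name (Sum.inl X) => X = Y
  | .name (Sum.inr _) => False
  | .top => False
  | .conj C D => occursVar Y C ∨ occursVar Y D
  | .ex _ C => occursVar Y C

/-! ### Auxiliary development -/

/-- Role depth. -/
def rdEL {N R : Type} : EL N R → ℕ
  | .name _ => 0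
  | .top => 0
  | .conj C D => max (rdEL C) (rdEL D)
  | .ex _ C => rdEL C + 1

/-- The chain interpretation of length `n`. -/
def chainI (N R : Type) (n : ℕ) : Interp N R where
  dom := Fin (n + 1)
  nonempty := ⟨0⟩
  cname := fun _ => Set.univ
  role := fun _ => {p | p.2.val = p.1.val + 1}

theorem chain_sem {N R : Type} (n : ℕ) :
    ∀ (E : EL N R) (i : Fin (n + 1)), i ∈ (chainI N R n).sem E ↔ i.val + rdEL E ≤ n := by
  intro E
  induction E with
  | name A => intro i; simp [chainI, Interp.sem, rdEL]; exact ⟨fun _ => by omega, fun _ => trivial⟩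
  | top => intro i; simp [chainI, Interp.sem, rdEL]; exact ⟨fun _ => by omega, fun _ => trivial⟩
  | conj C D ihC ihD =>
      intro i
      simp only [Interp.sem, Set.mem_inter_iff, ihC, ihD, rdEL]
      show (i ∈ (chainI N R n).sem C ∧ i ∈ (chainI N R n).sem D) ↔ _
      rw [ihC, ihD]
      omega
  | ex r C ih =>
      intro i
      simp only [Interp.sem, Set.mem_setOf_eq, rdEL]
      constructor
      · rintro ⟨y, hy, hyC⟩
        have h1 : (show Fin (n+1) from y).val + rdEL C ≤ n := (ih y).1 hyC
        have h2 : (show Fin (n+1) from y).val = i.val + 1 := hy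
        omega
      · intro h
        have hlt : i.val + 1 < n + 1 := by omega
        refine ⟨⟨i.val + 1, hlt⟩, rfl, (ih _).2 ?_⟩
        simp; omega

theorem rd_lt_of_subsume_ex {N R : Type} {C D : EL N R} {r : R}
    (h : Subsume C (.ex r D)) : rdEL D < rdEL C := by
  have h0 : (⟨0, Nat.succ_pos _⟩ : Fin (rdEL C + 1)) ∈ (chainI N R (rdEL C)).sem C :=
    (chain_sem (rdEL C) C _).2 (by simp)
  have h1 := h (chainI N R (rdEL C)) h0
  obtain ⟨y, hy, hyD⟩ := h1
  have hy' : (show Fin (rdEL C + 1) from y).val = (0 : ℕ) + 1 := hy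
  have h2 : (show Fin (rdEL C + 1) from y).val + rdEL D ≤ rdEL C := (chain_sem (rdEL C) D y).1 hyD
  omega

theorem subsume_refl {N R : Type} (C : EL N R) : Subsume C C := fun _ _ h => h

theorem subsume_trans {N R : Type} {C D E : EL N R}
    (h1 : Subsume C D) (h2 : Subsume D E) : Subsume C E :=
  fun I x hx => h2 I (h1 I hx)

theorem subsume_ex_mono {N R : Type} {C D : EL N R} (r : R)
    (h : Subsume C D) : Subsume (.ex r C) (.ex r D) := by
  rintro I x ⟨y, hxy, hyC⟩
  exact ⟨y, hxy, h I hyC⟩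

theorem subsume_conj_mono {N R : Type} {C C' D D' : EL N R}
    (h1 : Subsume C C') (h2 : Subsume D D') : Subsume (.conj C D) (.conj C' D') := by
  rintro I x ⟨hx1, hx2⟩
  exact ⟨h1 I hx1, h2 I hx2⟩

theorem sem_conjs {N R : Type} (I : Interp N R) :
    ∀ (Cs : List (EL N R)) (C : EL N R) (x : I.dom),
      x ∈ I.sem (conjs C Cs) ↔ x ∈ I.sem C ∧ ∀ D ∈ Cs, x ∈ I.sem D := by
  intro Cs
  induction Cs with
  | nil => intro C x; simp [conjs]
  | cons D Ds ih =>
      intro C x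
      simp only [conjs, Interp.sem, Set.mem_inter_iff, ih D x, List.mem_cons]
      constructor
      · rintro ⟨h1, h2, h3⟩
        exact ⟨h1, fun E hE => by rcases hE with rfl | hE; exact h2; exact h3 E hE⟩
      · rintro ⟨h1, h2⟩
        exact ⟨h1, h2 D (Or.inl rfl), fun E hE => h2 E (Or.inr hE)⟩

theorem sem_conjList {N R : Type} (I : Interp N R) (L : List (EL N R)) (x : I.dom) :
    x ∈ I.sem (conjList L) ↔ ∀ C ∈ L, x ∈ I.sem C := by
  cases L with
  | nil => simp [conjList, Interp.sem]
  | cons C Cs =>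
      simp only [conjList, sem_conjs, List.mem_cons]
      constructor
      · rintro ⟨h1, h2⟩ E hE
        rcases hE with rfl | hE; exact h1; exact h2 E hE
      · intro h
        exact ⟨h C (Or.inl rfl), fun E hE => h E (Or.inr hE)⟩

theorem subsume_conjList {N R : Type} (E : EL N R) (L : List (EL N R)) :
    Subsume E (conjList L) ↔ ∀ C ∈ L, Subsume E C := by
  constructor
  · intro h C hC I x hx
    exact (sem_conjList I L x).1 (h I hx) C hC
  · intro h I x hx
    exact (sem_conjList I L x).2 (fun C hC => h C hC I hx)

theorem isGround_conjs {V K R : Type} :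
    ∀ (Cs : List (EL (V ⊕ K) R)) (C : EL (V ⊕ K) R), isGround C →
      (∀ D ∈ Cs, isGround D) → isGround (conjs C Cs) := by
  intro Cs
  induction Cs with
  | nil => intro C hC _; exact hC
  | cons D Ds ih =>
      intro C hC h
      exact ⟨hC, ih D (h D (by simp)) (fun E hE => h E (by simp [hE]))⟩

theorem isGround_conjList {V K R : Type} (L : List (EL (V ⊕ K) R))
    (h : ∀ C ∈ L, isGround C) : isGround (conjList L) := by
  cases L with
  | nil => trivial
  | cons C Cs =>
      exact isGround_conjs Cs C (h C (by simp)) (fun E hE => h E (by simp [hE]))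

section Construction

variable {V K R : Type} (σ : V → EL (V ⊕ K) R) (Atnv : List (EL (V ⊕ K) R))

/-- The filtered atom list `S_X`. -/
noncomputable def filt (X : V) : List (EL (V ⊕ K) R) :=
  Atnv.filter (fun D => @decide (Subsume (σ X) (applySub σ D)) (Classical.propDecidable _))

theorem mem_filt {X : V} {D : EL (V ⊕ K) R} :
    D ∈ filt σ Atnv X ↔ D ∈ Atnv ∧ Subsume (σ X) (applySub σ D) := by
  simp only [filt, List.mem_filter]
  constructor
  · rintro ⟨h1, h2⟩
    exact ⟨h1, @of_decide_eq_true _ (Classical.propDecidable _) h2⟩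
  · rintro ⟨h1, h2⟩
    exact ⟨h1, @decide_eq_true _ (Classical.propDecidable _) h2⟩

/-- One-step rewriting of a flat atom along a substitution-in-progress. -/
def gfun (rec : V → EL (V ⊕ K) R) : EL (V ⊕ K) R → EL (V ⊕ K) R
  | .ex r (.name (Sum.inl Y)) => .ex r (rec Y)
  | D => D

theorem gfun_congr (rec rec' : V → EL (V ⊕ K) R) (D : EL (V ⊕ K) R)
    (h : ∀ (r : R) (Y : V), D = .ex r (.name (Sum.inl Y)) → rec Y = rec' Y) :
    gfun rec D = gfun rec' D := by
  cases D with
  | ex r C =>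
      cases C with
      | name n =>
          cases n with
          | inl Y => simp only [gfun]; rw [h r Y rfl]
          | inr A => rfl
      | top => rfl
      | conj _ _ => rfl
      | ex _ _ => rfl
  | name _ => rfl
  | top => rfl
  | conj _ _ => rfl

/-- Fueled construction of the local substitution. -/
noncomputable def sigSaux : ℕ → V → EL (V ⊕ K) R
  | 0, _ => .top
  | n + 1, X => conjList ((filt σ Atnv X).map (gfun (sigSaux n)))

/-- The local substitution `σ_S`. -/
noncomputable def sigS (X : V) : EL (V ⊕ K) R := sigSaux σ Atnv (rdEL (σ X) + 1) X

theorem sigSaux_stable :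
    ∀ n m (X : V), rdEL (σ X) < n → rdEL (σ X) < m →
      sigSaux σ Atnv n X = sigSaux σ Atnv m X := by
  intro n
  induction n with
  | zero => intro m X h; omega
  | succ n ih =>
      intro m X hn hm
      cases m with
      | zero => omega
      | succ m =>
          simp only [sigSaux]
          congr 1
          refine List.map_congr_left (fun D hD => ?_)
          refine gfun_congr _ _ _ (fun r Y hDeq => ?_)
          subst hDeq
          have h2 := (mem_filt σ Atnv).1 hD
          have hsub : Subsume (σ X) (.ex r (σ Y)) := by
            simpa [applySub] using h2.2
          have hlt := rd_lt_of_subsume_ex hsub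
          exact ih m Y (by omega) (by omega)

theorem sigS_eq
    (hflat : ∀ D ∈ Atnv,
      (∃ A : K, D = EL.name (Sum.inr A)) ∨ ∃ (r : R) (N' : V ⊕ K), D = EL.ex r (EL.name N'))
    (X : V) :
    sigS σ Atnv X = conjList ((filt σ Atnv X).map (applySub (sigS σ Atnv))) := by
  simp only [sigS, sigSaux]
  congr 1
  refine List.map_congr_left (fun D hD => ?_)
  have h2 := (mem_filt σ Atnv).1 hD
  rcases hflat D h2.1 with ⟨A, rfl⟩ | ⟨r, N', rfl⟩
  · rfl
  · cases N' with
    | inl Y =>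
        have hsub : Subsume (σ X) (.ex r (σ Y)) := by simpa [applySub] using h2.2
        have hlt := rd_lt_of_subsume_ex hsub
        simp only [gfun, applySub]
        congr 1
        exact sigSaux_stable σ Atnv _ _ Y (by omega) (by omega)
    | inr A => rfl

theorem sigS_ground
    (hflat : ∀ D ∈ Atnv,
      (∃ A : K, D = EL.name (Sum.inr A)) ∨ ∃ (r : R) (N' : V ⊕ K), D = EL.ex r (EL.name N'))
    : ∀ (n : ℕ) (X : V), rdEL (σ X) < n → isGround (sigS σ Atnv X) := by
  intro n
  induction n with
  | zero => intro X h; omega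
  | succ n ih =>
      intro X hn
      rw [sigS_eq σ Atnv hflat]
      refine isGround_conjList _ (fun C hC => ?_)
      simp only [List.mem_map] at hC
      obtain ⟨D, hD, rfl⟩ := hC
      have h2 := (mem_filt σ Atnv).1 hD
      rcases hflat D h2.1 with ⟨A, rfl⟩ | ⟨r, N', rfl⟩
      · trivial
      · cases N' with
        | inl Y =>
            have hsub : Subsume (σ X) (.ex r (σ Y)) := by simpa [applySub] using h2.2
            have hlt := rd_lt_of_subsume_ex hsub
            simpa [applySub, isGround] using ih Y (by omega)
        | inr A => trivial

theorem sigS_var_sub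
    (hflat : ∀ D ∈ Atnv,
      (∃ A : K, D = EL.name (Sum.inr A)) ∨ ∃ (r : R) (N' : V ⊕ K), D = EL.ex r (EL.name N'))
    : ∀ (n : ℕ) (X : V), rdEL (σ X) < n → Subsume (σ X) (sigS σ Atnv X) := by
  intro n
  induction n with
  | zero => intro X h; omega
  | succ n ih =>
      intro X hn
      rw [sigS_eq σ Atnv hflat]
      rw [subsume_conjList]
      intro C hC
      simp only [List.mem_map] at hC
      obtain ⟨D, hD, rfl⟩ := hC
      have h2 := (mem_filt σ Atnv).1 hD
      rcases hflat D h2.1 with ⟨A, rfl⟩ | ⟨r, N', rfl⟩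
      · simpa [applySub] using h2.2
      · cases N' with
        | inl Y =>
            have hsub : Subsume (σ X) (.ex r (σ Y)) := by simpa [applySub] using h2.2
            have hlt := rd_lt_of_subsume_ex hsub
            have hY : Subsume (σ Y) (sigS σ Atnv Y) := ih Y (by omega)
            simp only [applySub]
            exact subsume_trans hsub (subsume_ex_mono r hY)
        | inr A => simpa [applySub] using h2.2

end Construction

theorem stmt19 {V K R : Type} [Fintype V]
    (Γsub : List (EL (V ⊕ K) R × EL (V ⊕ K) R))
    (Γdissub : List (EL (V ⊕ K) R × EL (V ⊕ K) R))
    (Atnv : List (EL (V ⊕ K) R))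
    (hflat : ∀ D ∈ Atnv,
      (∃ A : K, D = EL.name (Sum.inr A)) ∨ ∃ (r : R) (N' : V ⊕ K), D = EL.ex r (EL.name N'))
    (σ : V → EL (V ⊕ K) R) (hg : ∀ X : V, isGround (σ X))
    (hsolp : ∀ p ∈ Γsub, Subsume (applySub σ p.1) (applySub σ p.2))
    (hsoln : ∀ p ∈ Γdissub, ¬ Subsume (applySub σ p.1) (applySub σ p.2)) :
    (∀ X : V, ¬ Relation.TransGen
        (fun X Y : V => ∃ D ∈ Atnv, Subsume (σ X) (applySub σ D) ∧ occursVar Y D) X X) ∧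
    ∃ σS : V → EL (V ⊕ K) R,
      (∀ X : V, isGround (σS X)) ∧
      (∀ (X : V) (E : EL (V ⊕ K) R), Subsume E (σS X) ↔
        ∀ D ∈ Atnv, Subsume (σ X) (applySub σ D) → Subsume E (applySub σS D)) ∧
      ∀ C : EL (V ⊕ K) R, Subsume (applySub σ C) (applySub σS C) := by
  constructor
  · -- acyclicity
    have hstep : ∀ X Y : V,
        (∃ D ∈ Atnv, Subsume (σ X) (applySub σ D) ∧ occursVar Y D) →
        rdEL (σ Y) < rdEL (σ X) := by
      rintro X Y ⟨D, hD, hsub, hocc⟩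
      rcases hflat D hD with ⟨A, rfl⟩ | ⟨r, N', rfl⟩
      · simp [occursVar] at hocc
      · cases N' with
        | inl Z =>
            have hZY : Z = Y := by simpa [occursVar] using hocc
            have hsub' : Subsume (σ X) (.ex r (σ Z)) := by simpa [applySub] using hsub
            have hlt := rd_lt_of_subsume_ex hsub'
            rwa [hZY] at hlt
        | inr A => simp [occursVar] at hocc
    intro X hX
    have : ∀ Y Z : V, Relation.TransGen
        (fun X Y : V => ∃ D ∈ Atnv, Subsume (σ X) (applySub σ D) ∧ occursVar Y D) Y Z →
        rdEL (σ Z) < rdEL (σ Y) := by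
      intro Y Z h
      induction h with
      | single h => exact hstep _ _ h
      | tail _ h ih => exact lt_trans (hstep _ _ h) ih
    exact absurd (this X X hX) (lt_irrefl _)
  · refine ⟨sigS σ Atnv, ?_, ?_, ?_⟩
    · intro X
      exact sigS_ground σ Atnv hflat (rdEL (σ X) + 1) X (Nat.lt_succ_self _)
    · intro X E
      rw [sigS_eq σ Atnv hflat, subsume_conjList]
      constructor
      · intro h D hD hsub
        exact h (applySub (sigS σ Atnv) D)
          (List.mem_map_of_mem ((mem_filt σ Atnv).2 ⟨hD, hsub⟩))
      · intro h C hC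
        simp only [List.mem_map] at hC
        obtain ⟨D, hD, rfl⟩ := hC
        have h2 := (mem_filt σ Atnv).1 hD
        exact h D h2.1 h2.2
    · intro C
      induction C with
      | name n =>
          cases n with
          | inl X =>
              simpa [applySub] using
                sigS_var_sub σ Atnv hflat (rdEL (σ X) + 1) X (Nat.lt_succ_self _)
          | inr A => exact subsume_refl _
      | top => exact subsume_refl _
      | conj C D ihC ihD => exact subsume_conj_mono ihC ihD
      | ex r C ih => exact subsume_ex_mono r ih
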